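/- Buchberger's criterion: a finite generating set G = {g_1,...,g_t} of a polynomial ideal I is a Groebner basis for I if and only if for all pairs i ≠ j, the remainder of the S-polynomial S(g_i, g_j) on division by G (listed in some order) is zero. -/

import Mathlib

open MvPolynomial
open scoped MonomialOrder

variable {σ K : Type*}

/-- The leading (multidegree) exponent of a polynomial with respect to a monomial order:
the maximum, for the order, of the exponents appearing in `f`. -/
noncomputable def leadExp [Field K] (m : MonomialOrder σ) (f : MvPolynomial σ K) :
    σ →₀ ℕ :=
  m.toSyn.symm (f.support.sup fun d => m.toSyn d)

/-- The leading term of a polynomial with respect to a monomial order. -/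
noncomputable def leadTerm [Field K] (m : MonomialOrder σ) (f : MvPolynomial σ K) :
    MvPolynomial σ K :=
  monomial (leadExp m f) (f.coeff (leadExp m f))

/-- `G` is a Groebner basis of the ideal `I` for the monomial order `m`:
a finite subset of `I` whose leading terms generate the same ideal as the leading
terms of all (nonzero) elements of `I`. -/
def IsGroebnerBasis [Field K] (m : MonomialOrder σ) (I : Ideal (MvPolynomial σ K))
    (G : Set (MvPolynomial σ K)) : Prop :=
  G.Finite ∧ G ⊆ (I : Set (MvPolynomial σ K)) ∧
    Ideal.span (leadTerm m '' G) =
      Ideal.span (leadTerm m '' {f | f ∈ I ∧ f ≠ 0})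

/-- `r` is a remainder of `f` on division by `G` (relative to the ideal `I`):
`f - r ∈ I` and no monomial of `r` is divisible by the leading monomial of any
nonzero element of `G`. -/
def IsRemainder [Field K] (m : MonomialOrder σ) (I : Ideal (MvPolynomial σ K))
    (G : Set (MvPolynomial σ K)) (f r : MvPolynomial σ K) : Prop :=
  f - r ∈ I ∧
    ∀ c ∈ r.support, ∀ g ∈ G, g ≠ 0 → ¬ leadExp m g ≤ c

/-- The S-polynomial of two nonzero polynomials:
`S(f,g) = X^γ/LT(f) * f − X^γ/LT(g) * g` where `X^γ = lcm(LM f, LM g)`. -/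
noncomputable def sPoly [Field K] (m : MonomialOrder σ) (f g : MvPolynomial σ K) :
    MvPolynomial σ K :=
  monomial (leadExp m f ⊔ leadExp m g - leadExp m f) (f.coeff (leadExp m f))⁻¹ * f -
    monomial (leadExp m f ⊔ leadExp m g - leadExp m g) (g.coeff (leadExp m g))⁻¹ * g

/-- `r` is a remainder of `f` on division (by the division algorithm) by the finite set `G`:
there are quotients `a g` with `f = ∑ a g * g + r`, no monomial of `r` divisible by the
leading monomial of any element of `G`, and `multideg (a g * g) ≤ multideg f`. -/
def IsDivisionRemainder [Field K] (m : MonomialOrder σ) (G : Finset (MvPolynomial σ K))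
    (f r : MvPolynomial σ K) : Prop :=
  ∃ a : MvPolynomial σ K → MvPolynomial σ K,
    f = (∑ g ∈ G, a g * g) + r ∧
    (∀ c ∈ r.support, ∀ g ∈ G, ¬ leadExp m g ≤ c) ∧
    ∀ g ∈ G, a g * g ≠ 0 → (leadExp m (a g * g)) ≼[m] (leadExp m f)

namespace Buch

variable [Field K] (m : MonomialOrder σ)

theorem toSyn_leadExp (f : MvPolynomial σ K) :
    m.toSyn (leadExp m f) = f.support.sup fun d => m.toSyn d := by
  simp [leadExp]

theorem le_leadExp {f : MvPolynomial σ K} {c : σ →₀ ℕ} (hc : c ∈ f.support) :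
    c ≼[m] leadExp m f := by
  rw [toSyn_leadExp]; exact Finset.le_sup hc

theorem coeff_eq_zero_of_lt {f : MvPolynomial σ K} {c : σ →₀ ℕ}
    (h : m.toSyn (leadExp m f) < m.toSyn c) : f.coeff c = 0 := by
  by_contra hc
  exact absurd (le_leadExp m (by simpa [mem_support_iff] using hc)) (not_le.2 h)

@[simp] theorem leadExp_zero : leadExp m (0 : MvPolynomial σ K) = 0 := by
  simp [leadExp]

theorem coeff_leadExp_ne_zero {f : MvPolynomial σ K} (hf : f ≠ 0) :
    f.coeff (leadExp m f) ≠ 0 := by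
  have hs : f.support.Nonempty := support_nonempty.2 hf
  obtain ⟨b, hb, hbe⟩ := f.support.exists_mem_eq_sup hs fun d => m.toSyn d
  have : leadExp m f = b := by
    rw [leadExp, hbe]; exact m.toSyn.symm_apply_apply b
  rw [this]; exact mem_support_iff.1 hb

theorem leadExp_mem_support {f : MvPolynomial σ K} (hf : f ≠ 0) :
    leadExp m f ∈ f.support :=
  mem_support_iff.2 (coeff_leadExp_ne_zero m hf)

theorem toSyn_leadExp_le_iff {f : MvPolynomial σ K} {d : MonomialOrder.syn m} :
    m.toSyn (leadExp m f) ≤ d ↔ ∀ c ∈ f.support, m.toSyn c ≤ d := by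
  rw [toSyn_leadExp]; exact Finset.sup_le_iff

theorem leadExp_add_le (f g : MvPolynomial σ K) :
    m.toSyn (leadExp m (f + g)) ≤ max (m.toSyn (leadExp m f)) (m.toSyn (leadExp m g)) := by
  classical
  rw [toSyn_leadExp_le_iff]
  intro c hc
  rcases Finset.mem_union.1 (MvPolynomial.support_add hc) with h | h
  · exact le_max_of_le_left (le_leadExp m h)
  · exact le_max_of_le_right (le_leadExp m h)

theorem leadExp_mul_le (f g : MvPolynomial σ K) {c : σ →₀ ℕ} (hc : c ∈ (f * g).support) :
    m.toSyn c ≤ m.toSyn (leadExp m f) + m.toSyn (leadExp m g) := by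
  classical
  have hc' : (f * g).coeff c ≠ 0 := mem_support_iff.1 hc
  rw [coeff_mul] at hc'
  obtain ⟨⟨d, e⟩, hde, hne⟩ := Finset.exists_ne_zero_of_sum_ne_zero hc'
  have hd : f.coeff d ≠ 0 := fun h0 => hne (by simp [h0])
  have he : g.coeff e ≠ 0 := fun h0 => hne (by simp [h0])
  rw [← Finset.HasAntidiagonal.mem_antidiagonal.1 hde, map_add]
  exact add_le_add (le_leadExp m (mem_support_iff.2 hd)) (le_leadExp m (mem_support_iff.2 he))

theorem coeff_mul_leadExp_add (f g : MvPolynomial σ K) :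
    (f * g).coeff (leadExp m f + leadExp m g) =
      f.coeff (leadExp m f) * g.coeff (leadExp m g) := by
  classical
  rw [coeff_mul]
  rw [Finset.sum_eq_single (leadExp m f, leadExp m g)]
  · intro b hb hne
    rcases Finset.HasAntidiagonal.mem_antidiagonal.1 hb with h
    by_contra hz
    have hb1 : f.coeff b.1 ≠ 0 := fun h0 => hz (by simp [h0])
    have hb2 : g.coeff b.2 ≠ 0 := fun h0 => hz (by simp [h0])
    have h1 : m.toSyn b.1 ≤ m.toSyn (leadExp m f) :=
      le_leadExp m (mem_support_iff.2 hb1)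
    have h2 : m.toSyn b.2 ≤ m.toSyn (leadExp m g) :=
      le_leadExp m (mem_support_iff.2 hb2)
    have hsum : m.toSyn b.1 + m.toSyn b.2 =
        m.toSyn (leadExp m f) + m.toSyn (leadExp m g) := by
      rw [← map_add, ← map_add, h]
    have e1 : m.toSyn b.1 = m.toSyn (leadExp m f) := le_antisymm h1 (by
      by_contra hlt
      have := add_lt_add_of_lt_of_le (lt_of_not_ge hlt) h2
      rw [hsum] at this; exact lt_irrefl _ this)
    have e2 : m.toSyn b.2 = m.toSyn (leadExp m g) := by
      have := hsum; rw [e1] at this; exact add_left_cancel this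
    exact hne (Prod.ext (m.toSyn.injective e1) (m.toSyn.injective e2))
  · intro h
    rw [Finset.HasAntidiagonal.mem_antidiagonal] at h
    simp at h

theorem leadExp_mul {f g : MvPolynomial σ K} (hf : f ≠ 0) (hg : g ≠ 0) :
    leadExp m (f * g) = leadExp m f + leadExp m g := by
  have hc : (f * g).coeff (leadExp m f + leadExp m g) ≠ 0 := by
    rw [coeff_mul_leadExp_add]
    exact mul_ne_zero (coeff_leadExp_ne_zero m hf) (coeff_leadExp_ne_zero m hg)
  apply m.toSyn.injective
  apply le_antisymm
  · rw [toSyn_leadExp_le_iff]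
    intro c hc'
    rw [map_add]
    exact leadExp_mul_le m f g hc'
  · exact le_leadExp m (mem_support_iff.2 hc)

theorem leadExp_monomial {d : σ →₀ ℕ} {c : K} (hc : c ≠ 0) :
    leadExp m (monomial d c) = d := by
  apply m.toSyn.injective
  rw [toSyn_leadExp]
  classical
  rw [support_monomial, if_neg hc, Finset.sup_singleton]

theorem leadExp_monomial_mul {d : σ →₀ ℕ} {c : K} {f : MvPolynomial σ K}
    (hc : c ≠ 0) (hf : f ≠ 0) :
    leadExp m (monomial d c * f) = d + leadExp m f := by
  rw [leadExp_mul m (fun h => hc (by simpa [MvPolynomial.monomial_eq_zero] using h)) hf,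
    leadExp_monomial m hc]

theorem coeff_monomial_mul_top {d : σ →₀ ℕ} {c : K} (f : MvPolynomial σ K) :
    (monomial d c * f).coeff (d + leadExp m f) = c * f.coeff (leadExp m f) := by
  rw [MvPolynomial.coeff_monomial_mul]

end Buch

namespace Buch2
open Buch
variable [Field K] (m : MonomialOrder σ)

theorem coeff_sub_eq_zero_of_le {f u : MvPolynomial σ K}
    (hdeg : m.toSyn (leadExp m u) ≤ m.toSyn (leadExp m f))
    (hcoeff : u.coeff (leadExp m f) = f.coeff (leadExp m f))
    {c : σ →₀ ℕ} (hc : m.toSyn (leadExp m f) ≤ m.toSyn c) :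
    (f - u).coeff c = 0 := by
  rcases eq_or_lt_of_le hc with h | h
  · have : c = leadExp m f := m.toSyn.injective h.symm
    rw [this, coeff_sub, hcoeff, sub_self]
  · rw [coeff_sub, coeff_eq_zero_of_lt m h, coeff_eq_zero_of_lt m (lt_of_le_of_lt hdeg h),
      sub_self]

theorem leadExp_sub_lt {f u : MvPolynomial σ K}
    (hdeg : m.toSyn (leadExp m u) ≤ m.toSyn (leadExp m f))
    (hcoeff : u.coeff (leadExp m f) = f.coeff (leadExp m f))
    (hne : f - u ≠ 0) :
    m.toSyn (leadExp m (f - u)) < m.toSyn (leadExp m f) := by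
  by_contra hlt
  exact coeff_leadExp_ne_zero m hne
    (coeff_sub_eq_zero_of_le m hdeg hcoeff (le_of_not_gt hlt))

theorem leadExp_leadTerm {f : MvPolynomial σ K} (hf : f ≠ 0) :
    leadExp m (leadTerm m f) = leadExp m f :=
  leadExp_monomial m (coeff_leadExp_ne_zero m hf)

theorem coeff_leadTerm (f : MvPolynomial σ K) :
    (leadTerm m f).coeff (leadExp m f) = f.coeff (leadExp m f) := by
  classical
  rw [leadTerm, coeff_monomial, if_pos rfl]

theorem leadExp_sub_leadTerm_lt {f : MvPolynomial σ K}
    (hne : f - leadTerm m f ≠ 0) :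
    m.toSyn (leadExp m (f - leadTerm m f)) < m.toSyn (leadExp m f) := by
  have hf : f ≠ 0 := by rintro rfl; simp [leadTerm] at hne
  exact leadExp_sub_lt m (le_of_eq (congrArg _ (leadExp_leadTerm m hf)))
    (coeff_leadTerm m f) hne

theorem leadExp_sum_le {α : Type*} (s : Finset α) (t : α → MvPolynomial σ K) :
    m.toSyn (leadExp m (∑ i ∈ s, t i)) ≤ s.sup fun i => m.toSyn (leadExp m (t i)) := by
  classical
  rw [toSyn_leadExp_le_iff]
  intro c hc
  obtain ⟨i, hi, hci⟩ := Finset.mem_biUnion.1 (MvPolynomial.support_sum hc)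
  exact le_trans (le_leadExp m hci) (Finset.le_sup (f := fun i => m.toSyn (leadExp m (t i))) hi)

theorem small_add {δ : MonomialOrder.syn m} {u v : MvPolynomial σ K}
    (hu : u ≠ 0 → m.toSyn (leadExp m u) < δ) (hv : v ≠ 0 → m.toSyn (leadExp m v) < δ) :
    u + v ≠ 0 → m.toSyn (leadExp m (u + v)) < δ := by
  intro h
  by_cases hu0 : u = 0
  · subst hu0; rw [zero_add] at h ⊢; exact hv h
  by_cases hv0 : v = 0
  · subst hv0; rw [add_zero] at h ⊢; exact hu h
  exact lt_of_le_of_lt (leadExp_add_le m u v) (max_lt (hu hu0) (hv hv0))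

end Buch2

namespace Buch3
open Buch Buch2
variable [Field K] (m : MonomialOrder σ)

theorem le_add_le {δ : MonomialOrder.syn m} {u v : MvPolynomial σ K}
    (hu : u ≠ 0 → m.toSyn (leadExp m u) ≤ δ) (hv : v ≠ 0 → m.toSyn (leadExp m v) ≤ δ) :
    u + v ≠ 0 → m.toSyn (leadExp m (u + v)) ≤ δ := by
  intro h
  by_cases hu0 : u = 0
  · subst hu0; rw [zero_add] at h ⊢; exact hv h
  by_cases hv0 : v = 0
  · subst hv0; rw [add_zero] at h ⊢; exact hu h
  exact le_trans (leadExp_add_le m u v) (max_le (hu hu0) (hv hv0))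

theorem division (G : Finset (MvPolynomial σ K)) (hG : ∀ g ∈ G, g ≠ 0)
    (f : MvPolynomial σ K) :
    ∃ (a : MvPolynomial σ K → MvPolynomial σ K) (r : MvPolynomial σ K),
      f = (∑ g ∈ G, a g * g) + r ∧
      (∀ g ∈ G, a g * g ≠ 0 → m.toSyn (leadExp m (a g * g)) ≤ m.toSyn (leadExp m f)) ∧
      (∀ c ∈ r.support, ∀ g ∈ G, ¬ leadExp m g ≤ c) := by
  classical
  suffices H : ∀ d : MonomialOrder.syn m, ∀ f : MvPolynomial σ K,
      m.toSyn (leadExp m f) = d →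
      ∃ (a : MvPolynomial σ K → MvPolynomial σ K) (r : MvPolynomial σ K),
        f = (∑ g ∈ G, a g * g) + r ∧
        (∀ g ∈ G, a g * g ≠ 0 → m.toSyn (leadExp m (a g * g)) ≤ m.toSyn (leadExp m f)) ∧
        (∀ c ∈ r.support, ∀ g ∈ G, ¬ leadExp m g ≤ c) by
    exact H _ f rfl
  intro d
  induction d using WellFoundedLT.induction with
  | _ d IH =>
  intro f hd
  by_cases hf0 : f = 0
  · refine ⟨0, 0, by simp [hf0], by simp, by simp⟩
  by_cases hdiv : ∃ g ∈ G, leadExp m g ≤ leadExp m f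
  · -- divisible case
    obtain ⟨g0, hg0G, hg0le⟩ := hdiv
    have hg00 : g0 ≠ 0 := hG g0 hg0G
    set q0 : K := f.coeff (leadExp m f) / g0.coeff (leadExp m g0) with hq0
    have hq00 : q0 ≠ 0 := div_ne_zero (coeff_leadExp_ne_zero m hf0)
      (coeff_leadExp_ne_zero m hg00)
    set u : MvPolynomial σ K :=
      monomial (leadExp m f - leadExp m g0) q0 * g0 with hu
    have hu0 : u ≠ 0 := mul_ne_zero (fun h => hq00 (by
      simpa [MvPolynomial.monomial_eq_zero] using h)) hg00
    have hule : leadExp m u = leadExp m f := by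
      rw [hu, leadExp_monomial_mul m hq00 hg00, tsub_add_cancel_of_le hg0le]
    have hucoeff : u.coeff (leadExp m f) = f.coeff (leadExp m f) := by
      rw [hu, MvPolynomial.coeff_monomial_mul', if_pos tsub_le_self,
        tsub_tsub_cancel_of_le hg0le, hq0,
        div_mul_cancel₀ _ (coeff_leadExp_ne_zero m hg00)]
    by_cases hfu : f - u = 0
    · -- f = u
      refine ⟨fun h => if h = g0 then monomial (leadExp m f - leadExp m g0) q0 else 0,
        0, ?_, ?_, by simp⟩
      · rw [add_zero]
        have key : ∀ h ∈ G, (if h = g0 then monomial (leadExp m f - leadExp m g0) q0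
              else 0) * h = if h = g0 then u else 0 := by
          intro h _
          split
          · rename_i hh; rw [hh, ← hu]
          · rw [zero_mul]
        rw [Finset.sum_congr rfl key, Finset.sum_ite_eq' G g0 (fun _ => u), if_pos hg0G]
        exact sub_eq_zero.1 hfu
      · intro g hgG
        dsimp only
        split
        · rename_i hh
          intro _
          rw [hh, ← hu, hule]
        · rw [zero_mul]
          intro hh; exact absurd rfl hh
    · have hlt : m.toSyn (leadExp m (f - u)) < d := by
        rw [← hd]
        exact leadExp_sub_lt m (le_of_eq (congrArg _ hule)) hucoeff hfu
      obtain ⟨a', r', heq', hdeg', hrem'⟩ := IH _ hlt (f - u) rfl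
      refine ⟨fun h => a' h + if h = g0 then monomial (leadExp m f - leadExp m g0) q0
        else 0, r', ?_, ?_, hrem'⟩
      · have key : ∀ h ∈ G, (a' h + if h = g0 then monomial (leadExp m f - leadExp m g0) q0
            else 0) * h = a' h * h + (if h = g0 then u else 0) := by
          intro h _
          rw [add_mul]
          congr 1
          split
          · rename_i hh; rw [hh, ← hu]
          · rw [zero_mul]
        rw [Finset.sum_congr rfl key, Finset.sum_add_distrib,
          Finset.sum_ite_eq' G g0 (fun _ => u), if_pos hg0G]
        rw [sub_eq_iff_eq_add] at heq'
        rw [heq']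
        ring
      · intro g hgG
        dsimp only
        rw [add_mul]
        apply le_add_le m
        · intro hne
          refine le_trans (hdeg' g hgG hne) ?_
          rw [hd]
          exact le_of_lt hlt
        · split
          · rename_i hh
            intro _
            rw [hh, ← hu, hule]
          · rw [zero_mul]
            intro hh; exact absurd rfl hh
  · -- leading term goes to remainder
    push_neg at hdiv
    by_cases hfu : f - leadTerm m f = 0
    · refine ⟨0, f, by simp, by simp, ?_⟩
      intro c hc g hgG
      have hfl : f = leadTerm m f := by rwa [sub_eq_zero] at hfu
      rw [hfl, leadTerm, support_monomial,
        if_neg (coeff_leadExp_ne_zero m hf0)] at hc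
      rw [Finset.mem_singleton.1 hc]
      exact hdiv g hgG
    · have hlt : m.toSyn (leadExp m (f - leadTerm m f)) < d := by
        rw [← hd]; exact leadExp_sub_leadTerm_lt m hfu
      obtain ⟨a', r', heq', hdeg', hrem'⟩ := IH _ hlt (f - leadTerm m f) rfl
      refine ⟨a', leadTerm m f + r', ?_, ?_, ?_⟩
      · rw [sub_eq_iff_eq_add] at heq'
        conv_lhs => rw [heq']
        ring
      · intro g hgG hne
        refine le_trans (hdeg' g hgG hne) ?_
        rw [hd]
        exact le_of_lt hlt
      · intro c hc g hgG
        rcases Finset.mem_union.1 (MvPolynomial.support_add hc) with h | h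
        · rw [leadTerm, support_monomial, if_neg (coeff_leadExp_ne_zero m hf0)] at h
          rw [Finset.mem_singleton.1 h]
          exact hdiv g hgG
        · exact hrem' c h g hgG

end Buch3

namespace Buch4
open Buch Buch2 Buch3
variable [Field K] (m : MonomialOrder σ)

theorem exists_leadExp_le_of_mem_span {S : Set (MvPolynomial σ K)}
    {p : MvPolynomial σ K} (hp : p ∈ Ideal.span (leadTerm m '' S)) :
    ∀ c ∈ p.support, ∃ g ∈ S, leadExp m g ≤ c := by
  classical
  induction hp using Submodule.span_induction with
  | mem x h =>
    obtain ⟨g, hgS, rfl⟩ := h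
    intro c hc
    rw [leadTerm, support_monomial] at hc
    split at hc
    · exact absurd hc (Finset.notMem_empty c)
    · exact ⟨g, hgS, le_of_eq (Finset.mem_singleton.1 hc).symm⟩
  | zero => simp
  | add x y hx hy ihx ihy =>
    intro c hc
    rcases Finset.mem_union.1 (MvPolynomial.support_add hc) with h | h
    · exact ihx c h
    · exact ihy c h
  | smul q x hx ih =>
    intro c hc
    rw [smul_eq_mul] at hc
    have hc' : (q * x).coeff c ≠ 0 := mem_support_iff.1 hc
    rw [coeff_mul] at hc'
    obtain ⟨⟨d, e⟩, hde, hne⟩ := Finset.exists_ne_zero_of_sum_ne_zero hc'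
    have hxe : x.coeff e ≠ 0 := fun h0 => hne (by simp [h0])
    obtain ⟨g, hgS, hg⟩ := ih e (mem_support_iff.2 hxe)
    refine ⟨g, hgS, le_trans hg ?_⟩
    rw [← Finset.HasAntidiagonal.mem_antidiagonal.1 hde]
    exact le_add_self

end Buch4

namespace Buch5
open Buch Buch2 Buch3 Buch4
variable [Field K] (m : MonomialOrder σ)

theorem forward_dir (I : Ideal (MvPolynomial σ K)) (G : Finset (MvPolynomial σ K))
    (h0 : (0 : MvPolynomial σ K) ∉ G)
    (hspan : Ideal.span (G : Set (MvPolynomial σ K)) = I)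
    (hGB : IsGroebnerBasis m I (G : Set (MvPolynomial σ K))) :
    ∀ gi ∈ G, ∀ gj ∈ G, gi ≠ gj → IsDivisionRemainder m G (sPoly m gi gj) 0 := by
  classical
  intro gi hgi gj hgj _
  have hG : ∀ g ∈ G, g ≠ 0 := fun g hg h => h0 (h ▸ hg)
  obtain ⟨a, r, heq, hdeg, hrem⟩ := division m G hG (sPoly m gi gj)
  have hrI : r ∈ I := by
    have hsum : (∑ g ∈ G, a g * g) ∈ I := by
      apply Ideal.sum_mem
      intro g hg
      exact Ideal.mul_mem_left I _ (hspan ▸ Ideal.subset_span hg)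
    have hSI : sPoly m gi gj ∈ I := by
      apply sub_mem
      · exact Ideal.mul_mem_left I _ (hspan ▸ Ideal.subset_span hgi)
      · exact Ideal.mul_mem_left I _ (hspan ▸ Ideal.subset_span hgj)
    have : r = sPoly m gi gj - ∑ g ∈ G, a g * g := by
      rw [heq]; ring
    rw [this]
    exact sub_mem hSI hsum
  have hr0 : r = 0 := by
    by_contra hr
    have hmem : leadTerm m r ∈ Ideal.span (leadTerm m '' ((G : Set (MvPolynomial σ K)))) := by
      rw [hGB.2.2]
      exact Ideal.subset_span ⟨r, ⟨hrI, hr⟩, rfl⟩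
    obtain ⟨g, hgG, hgle⟩ := exists_leadExp_le_of_mem_span m hmem (leadExp m r)
      (by rw [leadTerm, support_monomial, if_neg (coeff_leadExp_ne_zero m hr)]; simp)
    exact hrem (leadExp m r) (leadExp_mem_support m hr) g hgG hgle
  refine ⟨a, by rwa [hr0] at heq, by simp, hdeg⟩

end Buch5

namespace Buch6
open Buch Buch2 Buch3 Buch4
variable [Field K] (m : MonomialOrder σ)

theorem leadExp_neg (f : MvPolynomial σ K) : leadExp m (-f) = leadExp m f := by
  unfold leadExp
  congr 1
  rw [MvPolynomial.support_neg]

theorem leadExp_sub_le (u v : MvPolynomial σ K) :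
    m.toSyn (leadExp m (u - v)) ≤ max (m.toSyn (leadExp m u)) (m.toSyn (leadExp m v)) := by
  rw [sub_eq_add_neg]
  have := leadExp_add_le m u (-v)
  rwa [leadExp_neg] at this

theorem toSyn_zero_le {δ : MonomialOrder.syn m} : m.toSyn 0 ≤ δ := by
  rw [map_zero]
  exact m.bot_eq_zero ▸ bot_le

theorem leadExp_le_of_ne_imp {δ : MonomialOrder.syn m} {u : MvPolynomial σ K}
    (h : u ≠ 0 → m.toSyn (leadExp m u) ≤ δ) : m.toSyn (leadExp m u) ≤ δ := by
  by_cases h0 : u = 0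
  · rw [h0, leadExp_zero]; exact toSyn_zero_le m
  · exact h h0

end Buch6

namespace Buch7
open Buch Buch2 Buch3 Buch4 Buch6
variable [Field K] (m : MonomialOrder σ)

theorem key_lemma (G : Finset (MvPolynomial σ K)) (h0 : (0 : MvPolynomial σ K) ∉ G)
    (hB : ∀ gi ∈ G, ∀ gj ∈ G, gi ≠ gj → IsDivisionRemainder m G (sPoly m gi gj) 0)
    {f : MvPolynomial σ K} (hf : f ≠ 0)
    (hrep : ∃ a : MvPolynomial σ K → MvPolynomial σ K, f = ∑ g ∈ G, a g * g) :
    ∃ g ∈ G, leadExp m g ≤ leadExp m f := by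
  classical
  have hG : ∀ g ∈ G, g ≠ 0 := fun g hg h => h0 (h ▸ hg)
  set δfun : (MvPolynomial σ K → MvPolynomial σ K) → MonomialOrder.syn m :=
    fun a => G.sup fun g => m.toSyn (leadExp m (a g * g)) with hδfun
  set cnt : (MvPolynomial σ K → MvPolynomial σ K) → ℕ := fun a =>
    (G.filter fun g => a g * g ≠ 0 ∧ m.toSyn (leadExp m (a g * g)) = δfun a).card
    with hcnt
  set s : Set (MonomialOrder.syn m × ℕ) :=
    {p | ∃ a, f = ∑ g ∈ G, a g * g ∧ p = (δfun a, cnt a)} with hs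
  have hsne : s.Nonempty := by
    obtain ⟨a, ha⟩ := hrep
    exact ⟨(δfun a, cnt a), a, ha, rfl⟩
  have hwf : WellFounded (Prod.Lex ((· < ·) : MonomialOrder.syn m → _ → Prop)
      ((· < ·) : ℕ → ℕ → Prop)) :=
    WellFounded.prod_lex wellFounded_lt wellFounded_lt
  obtain ⟨p, hps, hmin⟩ := hwf.has_min s hsne
  obtain ⟨a, hfa, hpeq⟩ := hps
  set δ := δfun a with hδ
  set D : σ →₀ ℕ := m.toSyn.symm δ with hD
  have hDδ : m.toSyn D = δ := m.toSyn.apply_symm_apply δ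
  -- the degree of f is at most δ
  have hδf : m.toSyn (leadExp m f) ≤ δ := by
    rw [hfa]
    exact leadExp_sum_le m G (fun g => a g * g)
  -- the sup is attained at a nonzero product
  have claimA : ∃ g ∈ G, a g * g ≠ 0 ∧ m.toSyn (leadExp m (a g * g)) = δ := by
    have hex : ∃ g ∈ G, a g * g ≠ 0 := by
      by_contra h
      push_neg at h
      exact hf (hfa.trans (Finset.sum_eq_zero h))
    obtain ⟨g1, hg1G, hg1⟩ := hex
    obtain ⟨g0, hg0G, hsup⟩ := Finset.exists_mem_eq_sup G ⟨g1, hg1G⟩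
      (fun g => m.toSyn (leadExp m (a g * g)))
    by_cases h00 : a g0 * g0 = 0
    · have hsup0 : (G.sup fun g => m.toSyn (leadExp m (a g * g))) = 0 := by
        rw [hsup, h00, leadExp_zero, map_zero]
      have hδ0 : δ = 0 := hsup0
      refine ⟨g1, hg1G, hg1, le_antisymm ?_ ?_⟩
      · rw [hδ0]
        exact le_of_le_of_eq
          (Finset.le_sup (f := fun g => m.toSyn (leadExp m (a g * g))) hg1G) hsup0
      · rw [hδ0]
        exact m.bot_eq_zero ▸ bot_le
    · exact ⟨g0, hg0G, h00, hsup.symm⟩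
  by_cases hcf : f.coeff D = 0
  · -- contradiction with minimality
    exfalso
    set S : Finset (MvPolynomial σ K) :=
      G.filter (fun g => a g * g ≠ 0 ∧ m.toSyn (leadExp m (a g * g)) = δ) with hS
    have hSsub : S ⊆ G := Finset.filter_subset _ _
    have hcoeffD : ∀ g ∈ G, g ∉ S → (a g * g).coeff D = 0 := by
      intro g hgG hgS
      by_cases hz : a g * g = 0
      · rw [hz, MvPolynomial.coeff_zero]
      · have hle : m.toSyn (leadExp m (a g * g)) ≤ δ :=
          Finset.le_sup (f := fun g => m.toSyn (leadExp m (a g * g))) hgG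
        rcases lt_or_eq_of_le hle with h | h
        · exact coeff_eq_zero_of_lt m (by rw [hDδ]; exact h)
        · exact absurd (Finset.mem_filter.2 ⟨hgG, hz, h⟩) hgS
    have hSmem : ∀ g ∈ S, (a g * g).coeff D ≠ 0 := by
      intro g hgS
      obtain ⟨hgG, hz, hdg⟩ := Finset.mem_filter.1 hgS
      have hDe : leadExp m (a g * g) = D := m.toSyn.injective (by rw [hdg, hDδ])
      rw [← hDe]
      exact coeff_leadExp_ne_zero m hz
    have hSne : S.Nonempty := by
      obtain ⟨g, hgG, hz, hdg⟩ := claimA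
      exact ⟨g, Finset.mem_filter.2 ⟨hgG, hz, hdg⟩⟩
    have hsum0 : ∑ g ∈ G, (a g * g).coeff D = 0 := by
      rw [← MvPolynomial.coeff_sum, ← hfa]
      exact hcf
    have hcard : 1 < S.card := by
      by_contra hle
      push_neg at hle
      obtain ⟨x, hxS⟩ := Finset.card_eq_one.1
        (le_antisymm hle (Finset.card_pos.2 hSne))
      have hxmem : x ∈ S := hxS ▸ Finset.mem_singleton_self x
      have hone : ∑ g ∈ G, (a g * g).coeff D = (a x * x).coeff D := by
        apply Finset.sum_eq_single_of_mem x (hSsub hxmem)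
        intro b hbG hbx
        exact hcoeffD b hbG (by rw [hxS]; simpa using hbx)
      exact hSmem x hxmem (by rw [← hone]; exact hsum0)
    obtain ⟨x, hxS, y, hyS, hxy⟩ := Finset.one_lt_card.1 hcard
    obtain ⟨hxG, hx0, hxδ⟩ := Finset.mem_filter.1 hxS
    obtain ⟨hyG, hy0, hyδ⟩ := Finset.mem_filter.1 hyS
    have hax : a x ≠ 0 := fun h => hx0 (by rw [h, zero_mul])
    have hxne : x ≠ 0 := hG x hxG
    have hay : a y ≠ 0 := fun h => hy0 (by rw [h, zero_mul])
    have hyne : y ≠ 0 := hG y hyG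
    set αx : σ →₀ ℕ := leadExp m x with hαx
    set αy : σ →₀ ℕ := leadExp m y with hαy
    set dx : σ →₀ ℕ := leadExp m (a x) with hdx
    have hxD : dx + αx = D := by
      rw [hdx, hαx, ← leadExp_mul m hax hxne]
      exact m.toSyn.injective (by rw [hxδ, hDδ])
    have hyD : leadExp m (a y) + αy = D := by
      rw [hαy, ← leadExp_mul m hay hyne]
      exact m.toSyn.injective (by rw [hyδ, hDδ])
    have hαxD : αx ≤ D := hxD ▸ le_add_self
    have hαyD : αy ≤ D := hyD ▸ le_add_self
    set γ : σ →₀ ℕ := αx ⊔ αy with hγ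
    have hαxγ : αx ≤ γ := le_sup_left
    have hαyγ : αy ≤ γ := le_sup_right
    have hγD : γ ≤ D := sup_le hαxD hαyD
    have hcx : x.coeff αx ≠ 0 := coeff_leadExp_ne_zero m hxne
    have hcy : y.coeff αy ≠ 0 := coeff_leadExp_ne_zero m hyne
    set c : K := (a x).coeff dx * x.coeff αx with hc
    have hc0 : c ≠ 0 := mul_ne_zero (coeff_leadExp_ne_zero m hax) hcx
    set sp : MvPolynomial σ K := sPoly m x y with hsp
    have hspdef : sp = monomial (γ - αx) (x.coeff αx)⁻¹ * x -
        monomial (γ - αy) (y.coeff αy)⁻¹ * y := rfl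
    have hbex : ∃ b : MvPolynomial σ K → MvPolynomial σ K,
        sp = ∑ g ∈ G, b g * g ∧
        ∀ h ∈ G, b h * h ≠ 0 → m.toSyn (leadExp m (b h * h)) < m.toSyn γ := by
      by_cases hsp0 : sp = 0
      · refine ⟨0, ?_, ?_⟩
        · rw [hsp0]
          exact (Finset.sum_eq_zero (fun g _ => by rw [Pi.zero_apply, zero_mul])).symm
        · intro h _ hne
          exact absurd (by rw [Pi.zero_apply, zero_mul]) hne
      · obtain ⟨b, hbeq, _, hbdeg⟩ := hB x hxG y hyG hxy
        rw [add_zero] at hbeq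
        have hA : leadExp m (monomial (γ - αx) (x.coeff αx)⁻¹ * x) = γ := by
          rw [leadExp_monomial_mul m (inv_ne_zero hcx) hxne, tsub_add_cancel_of_le hαxγ]
        have hBB : leadExp m (monomial (γ - αy) (y.coeff αy)⁻¹ * y) = γ := by
          rw [leadExp_monomial_mul m (inv_ne_zero hcy) hyne, tsub_add_cancel_of_le hαyγ]
        have hspγ : m.toSyn (leadExp m sp) < m.toSyn γ := by
          have hle : m.toSyn (leadExp m sp) ≤ m.toSyn γ := by
            rw [hspdef]
            refine le_trans (leadExp_sub_le m _ _) ?_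
            rw [hA, hBB, max_self]
          rcases lt_or_eq_of_le hle with h | h
          · exact h
          · exfalso
            have hγsp : leadExp m sp = γ := m.toSyn.injective h
            have hz : sp.coeff γ = 0 := by
              rw [hspdef, MvPolynomial.coeff_sub,
                MvPolynomial.coeff_monomial_mul', if_pos tsub_le_self,
                tsub_tsub_cancel_of_le hαxγ, inv_mul_cancel₀ hcx,
                MvPolynomial.coeff_monomial_mul', if_pos tsub_le_self,
                tsub_tsub_cancel_of_le hαyγ, inv_mul_cancel₀ hcy, sub_self]
            exact coeff_leadExp_ne_zero m hsp0 (hγsp ▸ hz)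
        exact ⟨b, hbeq, fun h hhG hne =>
          lt_of_le_of_lt (hbdeg h hhG hne) hspγ⟩
    obtain ⟨b, hbeq, hbsmall⟩ := hbex
    have hkey : monomial dx ((a x).coeff dx) * x =
        monomial (D - γ) c * sp + monomial (D - αy) (c * (y.coeff αy)⁻¹) * y := by
      rw [hspdef, mul_sub, ← mul_assoc, ← mul_assoc, monomial_mul, monomial_mul]
      have e1 : D - γ + (γ - αx) = dx := by
        rw [tsub_add_tsub_cancel hγD hαxγ, ← hxD, add_tsub_cancel_right]
      have e2 : D - γ + (γ - αy) = D - αy := tsub_add_tsub_cancel hγD hαyγ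
      have e3 : c * (x.coeff αx)⁻¹ = (a x).coeff dx := by
        rw [hc, mul_inv_cancel_right₀ hcx]
      rw [e1, e2, e3]
      ring
    set ey : MvPolynomial σ K := monomial (D - αy) (c * (y.coeff αy)⁻¹) with hey
    set mo : MvPolynomial σ K := monomial (D - γ) c with hmo
    set a' : MvPolynomial σ K → MvPolynomial σ K := fun h =>
      (if h = x then a x - monomial dx ((a x).coeff dx)
       else if h = y then a y + ey else a h) + mo * b h with ha'
    have hfa' : f = ∑ g ∈ G, a' g * g := by
      have hpt : ∀ g ∈ G, a' g * g = a g * g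
          + ((if g = x then -(monomial dx ((a x).coeff dx) * x) else 0)
          + ((if g = y then ey * y else 0) + mo * b g * g)) := by
        intro g _
        simp only [ha']
        by_cases h1 : g = x
        · subst h1; simp only [eq_self_iff_true, if_true, if_pos rfl, if_neg hxy]; ring
        · by_cases h2 : g = y
          · subst h2; simp only [eq_self_iff_true, if_true, if_neg h1, if_pos rfl]; ring
          · simp only [if_neg h1, if_neg h2]; ring
      rw [Finset.sum_congr rfl hpt, Finset.sum_add_distrib, Finset.sum_add_distrib,
        Finset.sum_add_distrib, Finset.sum_ite_eq' G x, Finset.sum_ite_eq' G y,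
        if_pos hxG, if_pos hyG, ← hfa]
      have hmsum : ∑ g ∈ G, mo * b g * g = mo * sp := by
        rw [hbeq, Finset.mul_sum]
        exact Finset.sum_congr rfl (fun g _ => by rw [mul_assoc])
      rw [hmsum, hkey]
      ring
    -- degree bounds for the new representation
    have hbpart : ∀ h ∈ G, mo * b h * h ≠ 0 →
        m.toSyn (leadExp m (mo * b h * h)) < δ := by
      intro h hhG hne
      have hbh : b h * h ≠ 0 := fun h0 => hne (by rw [mul_assoc, h0, mul_zero])
      rw [mul_assoc, hmo, leadExp_monomial_mul m hc0 hbh, map_add]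
      calc m.toSyn (D - γ) + m.toSyn (leadExp m (b h * h))
          < m.toSyn (D - γ) + m.toSyn γ := add_lt_add_right (hbsmall h hhG hbh) _
        _ = m.toSyn (D - γ + γ) := (map_add _ _ _).symm
        _ = m.toSyn D := by rw [tsub_add_cancel_of_le hγD]
        _ = δ := hDδ
    have ha'x : a' x = (a x - monomial dx ((a x).coeff dx)) + mo * b x := by
      simp only [ha', eq_self_iff_true, if_true, if_neg hxy]
    have ha'y : a' y = (a y + ey) + mo * b y := by
      simp only [ha', if_neg (Ne.symm hxy), eq_self_iff_true, if_true]
    have hxsmall : a' x * x ≠ 0 → m.toSyn (leadExp m (a' x * x)) < δ := by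
      rw [ha'x, add_mul]
      apply Buch2.small_add m
      · intro hne
        have hsub : a x - monomial dx ((a x).coeff dx) ≠ 0 :=
          fun h => hne (by rw [h, zero_mul])
        have h1 : m.toSyn (leadExp m (a x - monomial dx ((a x).coeff dx)))
            < m.toSyn dx :=
          leadExp_sub_leadTerm_lt m (f := a x) hsub
        rw [leadExp_mul m hsub hxne, map_add]
        calc m.toSyn (leadExp m (a x - monomial dx ((a x).coeff dx))) + m.toSyn αx
            < m.toSyn dx + m.toSyn αx := add_lt_add_left h1 _
          _ = m.toSyn (dx + αx) := (map_add _ _ _).symm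
          _ = δ := by rw [hxD, hDδ]
      · exact hbpart x hxG
    have hball : ∀ h ∈ G, a' h * h ≠ 0 → m.toSyn (leadExp m (a' h * h)) ≤ δ := by
      intro h hhG
      by_cases h1 : h = x
      · subst h1
        intro hne
        exact le_of_lt (hxsmall hne)
      by_cases h2 : h = y
      · subst h2
        have ha'yy : a' h = (a h + ey) + mo * b h := ha'y
        rw [ha'yy, add_mul, add_mul]
        apply le_add_le m
        · apply le_add_le m
          · intro _
            exact Finset.le_sup (f := fun g => m.toSyn (leadExp m (a g * g))) hhG
          · intro _
            rw [hey, leadExp_monomial_mul m (mul_ne_zero hc0 (inv_ne_zero hcy)) hyne,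
              tsub_add_cancel_of_le hαyD, hDδ]
        · intro hne
          exact le_of_lt (hbpart h hhG hne)
      · have ha'h : a' h = a h + mo * b h := by
          simp only [ha', if_neg h1, if_neg h2]
        rw [ha'h, add_mul]
        apply le_add_le m
        · intro _
          exact Finset.le_sup (f := fun g => m.toSyn (leadExp m (a g * g))) hhG
        · intro hne
          exact le_of_lt (hbpart h hhG hne)
    have hnotS : ∀ h ∈ G, h ∉ S → a' h * h ≠ 0 → m.toSyn (leadExp m (a' h * h)) < δ := by
      intro h hhG hhS
      have h1 : h ≠ x := fun h' => hhS (h' ▸ hxS)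
      have h2 : h ≠ y := fun h' => hhS (h' ▸ hyS)
      have ha'h : a' h = a h + mo * b h := by
        simp only [ha', if_neg h1, if_neg h2]
      rw [ha'h, add_mul]
      apply Buch2.small_add m
      · intro hne
        rcases lt_or_eq_of_le
            (Finset.le_sup (f := fun g => m.toSyn (leadExp m (a g * g))) hhG : _ ≤ δ)
          with hlt | heqδ
        · exact hlt
        · exact absurd (Finset.mem_filter.2 ⟨hhG, hne, heqδ⟩) hhS
      · exact hbpart h hhG
    -- the new representation is lexicographically smaller
    have hδ'le : δfun a' ≤ δ := by
      apply Finset.sup_le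
      intro h hhG
      exact leadExp_le_of_ne_imp m (hball h hhG)
    have hlex : Prod.Lex ((· < ·) : MonomialOrder.syn m → _ → Prop)
        ((· < ·) : ℕ → ℕ → Prop) (δfun a', cnt a') p := by
      rw [hpeq]
      rcases lt_or_eq_of_le hδ'le with hlt | heqδ
      · exact Prod.Lex.left _ _ hlt
      · have hsub : (G.filter fun g => a' g * g ≠ 0 ∧
            m.toSyn (leadExp m (a' g * g)) = δfun a') ⊆ S.erase x := by
          intro h hh
          obtain ⟨hhG, hne, hdeq⟩ := Finset.mem_filter.1 hh
          rw [heqδ] at hdeq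
          refine Finset.mem_erase.2 ⟨?_, ?_⟩
          · rintro rfl
            exact absurd hdeq (ne_of_lt (hxsmall hne))
          · by_contra hhS
            exact absurd hdeq (ne_of_lt (hnotS h hhG hhS hne))
        have hcnt' : cnt a' < cnt a := by
          have e1 : cnt a' ≤ (S.erase x).card := Finset.card_le_card hsub
          have e2 : (S.erase x).card < S.card := Finset.card_erase_lt_of_mem hxS
          exact lt_of_le_of_lt e1 e2
        rw [← heqδ]
        exact Prod.Lex.right _ hcnt'
    exact hmin _ ⟨a', hfa', rfl⟩ hlex
  · -- leading exponent of f is D and it is attained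
    obtain ⟨g, hgG, hagg, hdeg⟩ := claimA
    have hDf : leadExp m f = D := by
      apply m.toSyn.injective
      apply le_antisymm
      · rw [hDδ]; exact hδf
      · rw [hDδ]
        exact (hDδ ▸ le_leadExp m (mem_support_iff.2 hcf) : _)
    have hag : a g ≠ 0 := fun h => hagg (by rw [h, zero_mul])
    have hg' : g ≠ 0 := fun h => hagg (by rw [h, mul_zero])
    have hmul : leadExp m (a g) + leadExp m g = D := by
      rw [← leadExp_mul m hag hg']
      apply m.toSyn.injective
      rw [hdeg, hDδ]
    exact ⟨g, hgG, hDf ▸ (hmul ▸ le_add_self)⟩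

end Buch7

namespace Buch8
open Buch Buch2 Buch3 Buch4 Buch5 Buch7

theorem buchberger_criterion' [Field K] (m : MonomialOrder σ)
    (I : Ideal (MvPolynomial σ K)) (G : Finset (MvPolynomial σ K))
    (h0 : (0 : MvPolynomial σ K) ∉ G)
    (hspan : Ideal.span (G : Set (MvPolynomial σ K)) = I) :
    IsGroebnerBasis m I (G : Set (MvPolynomial σ K)) ↔
      ∀ gi ∈ G, ∀ gj ∈ G, gi ≠ gj →
        IsDivisionRemainder m G (sPoly m gi gj) 0 := by
  constructor
  · exact forward_dir m I G h0 hspan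
  · intro hB
    refine ⟨G.finite_toSet, ?_, ?_⟩
    · intro g hg
      exact hspan ▸ Ideal.subset_span hg
    · apply le_antisymm
      · apply Ideal.span_mono
        rintro t ⟨g, hgG, rfl⟩
        exact ⟨g, ⟨hspan ▸ Ideal.subset_span hgG, fun h => h0 (h ▸ hgG)⟩, rfl⟩
      · rw [Ideal.span_le]
        rintro t ⟨r, ⟨hrI, hr0'⟩, rfl⟩
        have hrspan : r ∈ Ideal.span (G : Set (MvPolynomial σ K)) := by
          rw [hspan]; exact hrI
        obtain ⟨aa, -, haa⟩ := Submodule.mem_span_finset.1 hrspan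
        simp only [smul_eq_mul] at haa
        obtain ⟨g, hgG, hgle⟩ := key_lemma m G h0 hB hr0' ⟨aa, haa.symm⟩
        have hgne : g ≠ 0 := fun h => h0 (h ▸ hgG)
        have hlt : leadTerm m r = monomial (leadExp m r - leadExp m g)
            (r.coeff (leadExp m r) * (g.coeff (leadExp m g))⁻¹) * leadTerm m g := by
          rw [leadTerm, leadTerm, monomial_mul, tsub_add_cancel_of_le hgle, mul_assoc,
            inv_mul_cancel₀ (coeff_leadExp_ne_zero m hgne), mul_one]
        rw [SetLike.mem_coe, hlt]
        exact Ideal.mul_mem_left _ _ (Ideal.subset_span ⟨g, hgG, rfl⟩)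

end Buch8

/-- Buchberger's criterion. A finite generating set `G` of an ideal `I`,
consisting of nonzero polynomials, is a Groebner basis of `I` iff for all pairs of distinct
elements of `G` the S-polynomial has remainder zero on division by `G`. -/
theorem buchberger_criterion [Field K] (m : MonomialOrder σ)
    (I : Ideal (MvPolynomial σ K)) (G : Finset (MvPolynomial σ K))
    (h0 : (0 : MvPolynomial σ K) ∉ G)
    (hspan : Ideal.span (G : Set (MvPolynomial σ K)) = I) :
    IsGroebnerBasis m I (G : Set (MvPolynomial σ K)) ↔
      ∀ gi ∈ G, ∀ gj ∈ G, gi ≠ gj →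
        IsDivisionRemainder m G (sPoly m gi gj) 0 :=
  Buch8.buchberger_criterion' m I G h0 hspan
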